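/- Let k >= 1 and let d be an integer with d > 4k - 1 - d. There exists a self-complementary graph with degree sequence (d^{2k}, (4k-1-d)^{2k}) if and only if 2k <= d <= 3k - 1. Moreover, when 2k <= d <= 3k - 1, there exists such a self-complementary graph that has an antimorphism consisting of a single cycle of length 4k. -/

import Mathlib

open SimpleGraph

/-- The degree of a vertex, as the cardinality of its neighbor set. -/
noncomputable def deg {V : Type*} (G : SimpleGraph V) (v : V) : ℕ := (G.neighborSet v).ncard

/-- The degree sequence of a finite graph, as a multiset (which determines the
non-increasing sequence of vertex degrees). -/
noncomputable def degMultiset {V : Type*} [Finite V] (G : SimpleGraph V) : Multiset ℕ :=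
  letI := Fintype.ofFinite V
  Finset.univ.val.map fun v => deg G v

/-- A graph is self-complementary if it is isomorphic to its complement. -/
def IsSelfCompl {V : Type*} (G : SimpleGraph V) : Prop := Nonempty (G ≃g Gᶜ)

/-- A degree sequence is forcibly self-complementary if every realization of it
is self-complementary. -/
def ForciblySC (τ : Multiset ℕ) : Prop :=
  ∀ G : SimpleGraph (Fin (Multiset.card τ)), degMultiset G = τ → IsSelfCompl G

/- ### auxiliary lemmas -/

private lemma degMultiset_eq' {V : Type*} [inst : Fintype V] (G : SimpleGraph V) :
    degMultiset G = Finset.univ.val.map (fun v => deg G v) := by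
  unfold degMultiset
  rw [Subsingleton.elim (Fintype.ofFinite V) inst]

private lemma deg_eq_degree' {V : Type*} [Fintype V] (G : SimpleGraph V) [DecidableRel G.Adj]
    (v : V) : deg G v = G.degree v := by
  rw [deg, Set.ncard_eq_toFinset_card' (G.neighborSet v), SimpleGraph.degree,
    SimpleGraph.neighborFinset_def]

private lemma card_even_range' (K : ℕ) :
    ((Finset.range (2*K)).filter (fun m => m % 2 = 0)).card = K := by
  induction K with
  | zero => simp
  | succ K ih =>
    have h2 : 2*(K+1) = (2*K) + 1 + 1 := by ring
    rw [h2, Finset.range_add_one, Finset.range_add_one, Finset.filter_insert, Finset.filter_insert,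
      if_neg (by omega), if_pos (by omega),
      Finset.card_insert_of_notMem (by simp), ih]

private lemma card_fin_even' (k : ℕ) :
    (Finset.univ.filter (fun v : Fin (4*k) => v.val % 2 = 0)).card = 2*k := by
  rw [Finset.card_filter]
  rw [Fin.sum_univ_eq_sum_range (fun i => if i % 2 = 0 then 1 else 0) (4*k)]
  rw [← Finset.card_filter]
  have h : 4*k = 2*(2*k) := by ring
  rw [h, card_even_range']

private lemma card_fin_odd' (k : ℕ) :
    (Finset.univ.filter (fun v : Fin (4*k) => ¬ v.val % 2 = 0)).card = 2*k := by
  have h1 := card_fin_even' k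
  have h2 := Finset.card_filter_add_card_filter_not
    (s := (Finset.univ : Finset (Fin (4*k)))) (p := fun v => v.val % 2 = 0)
  simp only [Finset.card_univ, Fintype.card_fin] at h2
  omega

private lemma fin_sub_val' {n : ℕ} (v w : Fin n) :
    (w - v).val + v.val = w.val ∨ (w - v).val + v.val = w.val + n := by
  have hn : 0 < n := v.pos
  have h1 : (w - v).val = (n - v.val + w.val) % n := by rw [Fin.sub_def]
  have hv := v.isLt; have hw := w.isLt
  rcases Nat.lt_or_ge (n - v.val + w.val) n with h | h
  · rw [h1, Nat.mod_eq_of_lt h]; omega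
  · rw [h1, Nat.mod_eq_sub_mod h, Nat.mod_eq_of_lt (by omega)]; omega

private lemma fin_add_val' {n : ℕ} (v c : Fin n) :
    (v + c).val = v.val + c.val ∨ (v + c).val + n = v.val + c.val := by
  have h1 : (v + c).val = (v.val + c.val) % n := by rw [Fin.add_def]
  have hv := v.isLt; have hc := c.isLt
  rcases Nat.lt_or_ge (v.val + c.val) n with h | h
  · rw [h1, Nat.mod_eq_of_lt h]; omega
  · rw [h1, Nat.mod_eq_sub_mod h, Nat.mod_eq_of_lt (by omega)]; omega

private lemma addRight_one_isCycle' (n : ℕ) [NeZero n] (hn : 2 ≤ n) :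
    Equiv.Perm.IsCycle (Equiv.addRight (1 : Fin n)) ∧
      ∀ v : Fin n, Equiv.addRight (1 : Fin n) v ≠ v := by
  obtain ⟨m, rfl⟩ : ∃ m, n = m + 2 := ⟨n - 2, by omega⟩
  have he : Equiv.addRight (1 : Fin (m+2)) = finRotate (m+2) := by
    ext v
    have h2 := finRotate_succ_apply (n := m+1) v
    rw [h2]
    rfl
  constructor
  · rw [he]; exact isCycle_finRotate
  · intro v h
    have h1 : v + 1 = v := h
    have h2 : (1 : Fin (m+2)) = 0 := add_eq_left.mp h1
    rw [Fin.one_eq_zero_iff] at h2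
    omega

private def Csc (k t s m : ℕ) : Prop :=
  (0 < m ∧ m ≤ 2*t) ∨ (4*k - 2*t ≤ m ∧ m ≤ 4*k - 2) ∨ (s = 1 ∧ m = 2*k)

private instance (k t s m : ℕ) : Decidable (Csc k t s m) := by unfold Csc; infer_instance

private def M0sc (k t s : ℕ) : Finset ℕ :=
  (Finset.range (4*k)).filter (fun m => (m % 2 = 1 ∧ m < 2*k) ∨ (m % 2 = 0 ∧ Csc k t s m))

private def M1sc (k t s : ℕ) : Finset ℕ :=
  (Finset.range (4*k)).filter
    (fun m => (m % 2 = 1 ∧ 2*k < m) ∨ (m % 2 = 0 ∧ 0 < m ∧ ¬ Csc k t s m))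

private lemma mem_M0sc {k t s m : ℕ} :
    m ∈ M0sc k t s ↔ m < 4*k ∧ ((m % 2 = 1 ∧ m < 2*k) ∨
      (m % 2 = 0 ∧ ((0 < m ∧ m ≤ 2*t) ∨ (4*k - 2*t ≤ m ∧ m ≤ 4*k - 2) ∨
        (s = 1 ∧ m = 2*k)))) := by
  rw [M0sc, Finset.mem_filter, Finset.mem_range, Csc]

private lemma mem_M1sc {k t s m : ℕ} :
    m ∈ M1sc k t s ↔ m < 4*k ∧ ((m % 2 = 1 ∧ 2*k < m) ∨
      (m % 2 = 0 ∧ 0 < m ∧ ¬ ((0 < m ∧ m ≤ 2*t) ∨ (4*k - 2*t ≤ m ∧ m ≤ 4*k - 2) ∨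
        (s = 1 ∧ m = 2*k)))) := by
  rw [M1sc, Finset.mem_filter, Finset.mem_range, Csc]

private lemma card_M0sc {k t s : ℕ} (hk : 1 ≤ k) (hs : s ≤ 1) (ht : t + 1 ≤ k) :
    (M0sc k t s).card = k + 2*t + s := by
  have hset : M0sc k t s =
      ((Finset.range k).image (fun j => 2*j+1) ∪ (Finset.range t).image (fun j => 2*j+2)) ∪
      ((Finset.range t).image (fun j => 4*k-2-2*j) ∪
        (Finset.range s).image (fun _ => 2*k)) := by
    ext m
    simp only [mem_M0sc, Finset.mem_union, Finset.mem_image, Finset.mem_range]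
    constructor
    · rintro ⟨hm4, (⟨ho, hlt⟩ | ⟨he, (⟨h1, h2⟩ | ⟨h1, h2⟩ | ⟨h1, h2⟩)⟩)⟩
      · exact Or.inl (Or.inl ⟨m/2, by omega, by omega⟩)
      · exact Or.inl (Or.inr ⟨m/2 - 1, by omega, by omega⟩)
      · exact Or.inr (Or.inl ⟨(4*k-2-m)/2, by omega, by omega⟩)
      · exact Or.inr (Or.inr ⟨0, by omega, by omega⟩)
    · rintro ((⟨j, hj, rfl⟩ | ⟨j, hj, rfl⟩) | (⟨j, hj, rfl⟩ | ⟨j, hj, rfl⟩))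
      · exact ⟨by omega, Or.inl ⟨by omega, by omega⟩⟩
      · exact ⟨by omega, Or.inr ⟨by omega, Or.inl ⟨by omega, by omega⟩⟩⟩
      · exact ⟨by omega, Or.inr ⟨by omega, Or.inr (Or.inl ⟨by omega, by omega⟩)⟩⟩
      · exact ⟨by omega, Or.inr ⟨by omega, Or.inr (Or.inr ⟨by omega, by omega⟩)⟩⟩
  have hmem : ∀ (c : ℕ) (f : ℕ → ℕ) (m : ℕ), m ∈ (Finset.range c).image f →
      ∃ j, j < c ∧ f j = m := by
    intro c f m hm
    simp only [Finset.mem_image, Finset.mem_range] at hm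
    exact ⟨hm.choose, hm.choose_spec⟩
  have inj1 : ((Finset.range k).image (fun j => 2*j+1)).card = k := by
    rw [Finset.card_image_of_injOn, Finset.card_range]
    intro a _ b _ hab; dsimp only at hab; omega
  have inj2 : ((Finset.range t).image (fun j => 2*j+2)).card = t := by
    rw [Finset.card_image_of_injOn, Finset.card_range]
    intro a _ b _ hab; dsimp only at hab; omega
  have inj3 : ((Finset.range t).image (fun j => 4*k-2-2*j)).card = t := by
    rw [Finset.card_image_of_injOn, Finset.card_range]
    intro a ha b hb hab
    simp only [Finset.coe_range, Set.mem_Iio] at ha hb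
    dsimp only at hab; omega
  have inj4 : ((Finset.range s).image (fun _ => 2*k)).card = s := by
    rcases (by omega : s = 0 ∨ s = 1) with rfl | rfl <;> simp
  have hd12 : Disjoint ((Finset.range k).image (fun j => 2*j+1))
      ((Finset.range t).image (fun j => 2*j+2)) := by
    rw [Finset.disjoint_left]
    intro a ha hb
    obtain ⟨j1, hj1, rfl⟩ := hmem _ _ _ ha
    obtain ⟨j2, hj2, h⟩ := hmem _ _ _ hb
    omega
  have hd34 : Disjoint ((Finset.range t).image (fun j => 4*k-2-2*j))
      ((Finset.range s).image (fun _ => 2*k)) := by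
    rw [Finset.disjoint_left]
    intro a ha hb
    obtain ⟨j1, hj1, rfl⟩ := hmem _ _ _ ha
    obtain ⟨j2, hj2, h⟩ := hmem _ _ _ hb
    omega
  have hdbig : Disjoint
      ((Finset.range k).image (fun j => 2*j+1) ∪ (Finset.range t).image (fun j => 2*j+2))
      ((Finset.range t).image (fun j => 4*k-2-2*j) ∪
        (Finset.range s).image (fun _ => 2*k)) := by
    rw [Finset.disjoint_left]
    intro a ha hb
    rw [Finset.mem_union] at ha hb
    rcases ha with ha | ha <;> rcases hb with hb | hb <;>
    · obtain ⟨j1, hj1, rfl⟩ := hmem _ _ _ ha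
      obtain ⟨j2, hj2, h⟩ := hmem _ _ _ hb
      omega
  rw [hset, Finset.card_union_of_disjoint hdbig, Finset.card_union_of_disjoint hd12,
    Finset.card_union_of_disjoint hd34, inj1, inj2, inj3, inj4]
  omega

private lemma card_M1sc {k t s : ℕ} (hk : 1 ≤ k) (hs : s ≤ 1) (ht : t + 1 ≤ k) :
    (M1sc k t s).card + (k + 2*t + s) + 1 = 4*k := by
  have hmem : ∀ (c : ℕ) (f : ℕ → ℕ) (m : ℕ), m ∈ (Finset.range c).image f →
      ∃ j, j < c ∧ f j = m := by
    intro c f m hm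
    simp only [Finset.mem_image, Finset.mem_range] at hm
    exact ⟨hm.choose, hm.choose_spec⟩
  have hset : M1sc k t s =
      ((Finset.range k).image (fun j => 2*k+1+2*j) ∪
        (Finset.range (k-1-t)).image (fun j => 2*t+2+2*j)) ∪
      ((Finset.range (k-1-t)).image (fun j => 2*k+2+2*j) ∪
        (Finset.range (1-s)).image (fun _ => 2*k)) := by
    ext m
    simp only [mem_M1sc, Finset.mem_union, Finset.mem_image, Finset.mem_range]
    constructor
    · rintro ⟨hm4, (⟨ho, hlt⟩ | ⟨he, hpos, hnc⟩)⟩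
      · exact Or.inl (Or.inl ⟨(m-2*k-1)/2, by omega, by omega⟩)
      · rcases (by omega : m < 2*k ∨ m = 2*k ∨ 2*k < m) with h | h | h
        · exact Or.inl (Or.inr ⟨(m-2*t-2)/2, by omega, by omega⟩)
        · exact Or.inr (Or.inr ⟨0, by omega, by omega⟩)
        · exact Or.inr (Or.inl ⟨(m-2*k-2)/2, by omega, by omega⟩)
    · rintro ((⟨j, hj, rfl⟩ | ⟨j, hj, rfl⟩) | (⟨j, hj, rfl⟩ | ⟨j, hj, rfl⟩))
      · exact ⟨by omega, Or.inl ⟨by omega, by omega⟩⟩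
      · exact ⟨by omega, Or.inr ⟨by omega, by omega, by omega⟩⟩
      · exact ⟨by omega, Or.inr ⟨by omega, by omega, by omega⟩⟩
      · exact ⟨by omega, Or.inr ⟨by omega, by omega, by omega⟩⟩
  have inj1 : ((Finset.range k).image (fun j => 2*k+1+2*j)).card = k := by
    rw [Finset.card_image_of_injOn, Finset.card_range]
    intro a _ b _ hab; dsimp only at hab; omega
  have inj2 : ((Finset.range (k-1-t)).image (fun j => 2*t+2+2*j)).card = k-1-t := by
    rw [Finset.card_image_of_injOn, Finset.card_range]
    intro a _ b _ hab; dsimp only at hab; omega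
  have inj3 : ((Finset.range (k-1-t)).image (fun j => 2*k+2+2*j)).card = k-1-t := by
    rw [Finset.card_image_of_injOn, Finset.card_range]
    intro a _ b _ hab; dsimp only at hab; omega
  have inj4 : ((Finset.range (1-s)).image (fun _ => 2*k)).card = 1-s := by
    rcases (by omega : s = 0 ∨ s = 1) with rfl | rfl <;> simp
  have hd12 : Disjoint ((Finset.range k).image (fun j => 2*k+1+2*j))
      ((Finset.range (k-1-t)).image (fun j => 2*t+2+2*j)) := by
    rw [Finset.disjoint_left]
    intro a ha hb
    obtain ⟨j1, hj1, rfl⟩ := hmem _ _ _ ha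
    obtain ⟨j2, hj2, h⟩ := hmem _ _ _ hb
    omega
  have hd34 : Disjoint ((Finset.range (k-1-t)).image (fun j => 2*k+2+2*j))
      ((Finset.range (1-s)).image (fun _ => 2*k)) := by
    rw [Finset.disjoint_left]
    intro a ha hb
    obtain ⟨j1, hj1, rfl⟩ := hmem _ _ _ ha
    obtain ⟨j2, hj2, h⟩ := hmem _ _ _ hb
    omega
  have hdbig : Disjoint
      ((Finset.range k).image (fun j => 2*k+1+2*j) ∪
        (Finset.range (k-1-t)).image (fun j => 2*t+2+2*j))
      ((Finset.range (k-1-t)).image (fun j => 2*k+2+2*j) ∪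
        (Finset.range (1-s)).image (fun _ => 2*k)) := by
    rw [Finset.disjoint_left]
    intro a ha hb
    rw [Finset.mem_union] at ha hb
    rcases ha with ha | ha <;> rcases hb with hb | hb <;>
    · obtain ⟨j1, hj1, rfl⟩ := hmem _ _ _ ha
      obtain ⟨j2, hj2, h⟩ := hmem _ _ _ hb
      omega
  rw [hset, Finset.card_union_of_disjoint hdbig, Finset.card_union_of_disjoint hd12,
    Finset.card_union_of_disjoint hd34, inj1, inj2, inj3, inj4]
  omega

set_option maxHeartbeats 1000000 in
private def Gsc (k t s : ℕ) : SimpleGraph (Fin (4*k)) where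
  Adj v w := v ≠ w ∧ ((v.val % 2 = 0 ∧ (w - v).val ∈ M0sc k t s) ∨
    (¬ v.val % 2 = 0 ∧ (w - v).val ∈ M1sc k t s))
  symm := by
    constructor
    rintro v w ⟨hne, h⟩
    refine ⟨Ne.symm hne, ?_⟩
    have h1 := fin_sub_val' v w
    have h2 := fin_sub_val' w v
    have hv := v.isLt
    have hw := w.isLt
    have hb1 := (w - v).isLt
    have hb2 := (v - w).isLt
    have hne0 : ¬ (w - v).val = 0 := by
      intro h0
      exact hne (Fin.val_injective (by omega : v.val = w.val))
    simp only [mem_M0sc, mem_M1sc] at h ⊢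
    omega
  loopless := ⟨fun v h => h.1 rfl⟩

private lemma gsc_adj {k t s : ℕ} (v w : Fin (4*k)) :
    (Gsc k t s).Adj v w ↔ v ≠ w ∧ ((v.val % 2 = 0 ∧ (w - v).val ∈ M0sc k t s) ∨
      (¬ v.val % 2 = 0 ∧ (w - v).val ∈ M1sc k t s)) := Iff.rfl

private lemma deg_Gsc {k t s : ℕ} (hk : 1 ≤ k) (hs : s ≤ 1) (ht : t + 1 ≤ k)
    (v : Fin (4*k)) :
    deg (Gsc k t s) v = if v.val % 2 = 0 then k + 2*t + s else 3*k - 1 - 2*t - s := by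
  haveI : NeZero (4*k) := ⟨by omega⟩
  set M : Finset ℕ := if v.val % 2 = 0 then M0sc k t s else M1sc k t s with hM
  have hbound : ∀ m ∈ M, m < 4*k := by
    intro m hm
    rw [hM] at hm
    split_ifs at hm
    · exact (mem_M0sc.1 hm).1
    · exact (mem_M1sc.1 hm).1
  have hpos : ∀ m ∈ M, 0 < m := by
    intro m hm
    rw [hM] at hm
    split_ifs at hm
    · have := mem_M0sc.1 hm; omega
    · have := mem_M1sc.1 hm; omega
  have hset : (Gsc k t s).neighborSet v = ↑((M.attachFin hbound).image (fun c => v + c)) := by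
    ext w
    simp only [SimpleGraph.mem_neighborSet, gsc_adj, Finset.coe_image, Set.mem_image,
      Finset.mem_coe, Finset.mem_attachFin]
    constructor
    · rintro ⟨hne, h⟩
      refine ⟨w - v, ?_, by rw [add_comm, sub_add_cancel]⟩
      rcases h with ⟨hp, hm⟩ | ⟨hp, hm⟩
      · rw [hM, if_pos hp]; exact hm
      · rw [hM, if_neg hp]; exact hm
    · rintro ⟨c, hc, rfl⟩
      have hc0 : 0 < c.val := hpos _ hc
      have hsub : v + c - v = c := add_sub_cancel_left v c
      refine ⟨?_, ?_⟩
      · intro h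
        have h2 : c = 0 := add_eq_left.mp h.symm
        rw [h2] at hc0
        simp at hc0
      · rw [hsub]
        by_cases hp : v.val % 2 = 0
        · left; refine ⟨hp, ?_⟩; rwa [hM, if_pos hp] at hc
        · right; refine ⟨hp, ?_⟩; rwa [hM, if_neg hp] at hc
  rw [deg, hset, Set.ncard_coe_finset,
    Finset.card_image_of_injective _ (fun a b h => by exact add_left_cancel h),
    Finset.card_attachFin]
  rw [hM]
  split_ifs
  · exact card_M0sc hk hs ht
  · have := card_M1sc (k := k) (t := t) (s := s) hk hs ht
    omega

private lemma gsc_map {k t s : ℕ} [NeZero (4*k)] (v w : Fin (4*k)) :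
    (Gsc k t s)ᶜ.Adj (v + 1) (w + 1) ↔ (Gsc k t s).Adj v w := by
  have hk : 1 ≤ k := by
    have h := NeZero.ne (4*k)
    omega
  have hsub : w + 1 - (v + 1) = w - v := add_sub_add_right_eq_sub w v 1
  have h1 := fin_sub_val' v w
  have hv := v.isLt
  have hw := w.isLt
  have hb1 := (w - v).isLt
  have hone : (1 : Fin (4*k)).val = 1 := by
    rw [Fin.val_one']
    exact Nat.mod_eq_of_lt (by omega)
  have hv1 := fin_add_val' v 1
  rw [hone] at hv1
  have hv1b := (v + 1).isLt
  rw [SimpleGraph.compl_adj, gsc_adj, gsc_adj, hsub]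
  simp only [ne_eq, add_left_inj]
  by_cases hvw : v = w
  · simp [hvw]
  · have hm0 : 0 < (w - v).val := by
      rcases Nat.eq_zero_or_pos (w - v).val with h0 | h0
      · exfalso
        exact hvw (Fin.val_injective (by omega : v.val = w.val))
      · exact h0
    have hpart : ((w - v).val ∈ M0sc k t s) ↔ ¬ ((w - v).val ∈ M1sc k t s) := by
      simp only [mem_M0sc, mem_M1sc]
      omega
    have hpar : ((v + 1).val % 2 = 0) ↔ ¬ (v.val % 2 = 0) := by omega
    have hne : ¬ (v = w) := hvw
    generalize ((w - v).val ∈ M0sc k t s) = A0 at hpart ⊢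
    generalize ((w - v).val ∈ M1sc k t s) = A1 at hpart ⊢
    generalize ((v+1).val % 2 = 0) = P1 at hpar ⊢
    generalize (v.val % 2 = 0) = P0 at hpar ⊢
    tauto

private lemma construction' (k d t s : ℕ) (hk : 1 ≤ k) (hs : s ≤ 1) (ht : t + 1 ≤ k)
    (hd : d = k + 2*t + s) :
    ∃ G : SimpleGraph (Fin (4*k)),
      degMultiset G =
        Multiset.replicate (2*k) d + Multiset.replicate (2*k) (4*k - 1 - d) ∧
      ∃ σ : G ≃g Gᶜ,
        Equiv.Perm.IsCycle (σ.toEquiv : Equiv.Perm (Fin (4*k))) ∧ ∀ v, σ v ≠ v := by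
  haveI : NeZero (4*k) := ⟨by omega⟩
  refine ⟨Gsc k t s, ?_, ?_⟩
  · rw [degMultiset_eq']
    have hdeg : ∀ v : Fin (4*k), deg (Gsc k t s) v =
        if v.val % 2 = 0 then d else 4*k - 1 - d := by
      intro v
      rw [deg_Gsc hk hs ht]
      split_ifs
      · omega
      · omega
    rw [Multiset.map_congr rfl (fun v _ => hdeg v)]
    have hsplit := Multiset.filter_add_not (fun v : Fin (4*k) => v.val % 2 = 0)
      (Finset.univ.val)
    rw [← hsplit, Multiset.map_add]
    congr 1
    · rw [Multiset.map_congr rfl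
        (fun v hv => if_pos (Multiset.of_mem_filter hv))]
      rw [Multiset.map_const']
      congr 1
      have : Multiset.filter (fun v : Fin (4*k) => v.val % 2 = 0) Finset.univ.val
          = (Finset.univ.filter (fun v : Fin (4*k) => v.val % 2 = 0)).val := by
        rw [Finset.filter_val]
      rw [this, ← Finset.card_def, card_fin_even']
    · have hc2 : Multiset.map (fun v : Fin (4*k) => if v.val % 2 = 0 then d else 4*k-1-d)
          (Multiset.filter (fun a : Fin (4*k) => ¬ a.val % 2 = 0) Finset.univ.val)
          = Multiset.map (fun _ : Fin (4*k) => 4*k-1-d)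
            (Multiset.filter (fun a : Fin (4*k) => ¬ a.val % 2 = 0) Finset.univ.val) :=
        Multiset.map_congr rfl (fun v hv => if_neg
          (Multiset.of_mem_filter (p := fun a : Fin (4*k) => ¬ a.val % 2 = 0) hv))
      rw [hc2, Multiset.map_const']
      congr 1
      have : Multiset.filter (fun v : Fin (4*k) => ¬ v.val % 2 = 0) Finset.univ.val
          = (Finset.univ.filter (fun v : Fin (4*k) => ¬ v.val % 2 = 0)).val := by
        rw [Finset.filter_val]
      rw [this, ← Finset.card_def, card_fin_odd']
  · obtain ⟨hcyc, hfix⟩ := addRight_one_isCycle' (4*k) (by omega)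
    refine ⟨⟨Equiv.addRight (1 : Fin (4*k)), ?_⟩, hcyc, fun v => hfix v⟩
    intro v w
    exact gsc_map v w

private lemma necessity' (k d : ℕ) (hk : 1 ≤ k) (hd : 4*k - 1 - d < d)
    (G : SimpleGraph (Fin (4*k)))
    (hG : degMultiset G =
      Multiset.replicate (2*k) d + Multiset.replicate (2*k) (4*k - 1 - d))
    (hsc : IsSelfCompl G) : 2*k ≤ d ∧ d + 1 ≤ 3*k := by
  classical
  obtain ⟨φ⟩ := hsc
  rw [degMultiset_eq'] at hG
  have hmem : ∀ v : Fin (4*k), deg G v = d ∨ deg G v = 4*k - 1 - d := by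
    intro v
    have hv : deg G v ∈ Multiset.map (fun v => deg G v) Finset.univ.val :=
      Multiset.mem_map_of_mem _ (Finset.mem_univ_val v)
    rw [hG, Multiset.mem_add] at hv
    rcases hv with h | h
    · exact Or.inl (Multiset.eq_of_mem_replicate h)
    · exact Or.inr (Multiset.eq_of_mem_replicate h)
  have hx : ∃ v : Fin (4*k), deg G v = d := by
    have hdm : d ∈ Multiset.map (fun v => deg G v) Finset.univ.val := by
      rw [hG, Multiset.mem_add]
      exact Or.inl (Multiset.mem_replicate.2 ⟨by omega, rfl⟩)
    obtain ⟨v, _, hv⟩ := Multiset.mem_map.1 hdm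
    exact ⟨v, hv⟩
  obtain ⟨v0, hv0⟩ := hx
  have hdlt : d < 4*k := by
    rw [← hv0, deg_eq_degree']
    have h := G.degree_lt_card_verts v0
    simpa using h
  have h2k : 2*k ≤ d := by omega
  refine ⟨h2k, ?_⟩
  set D := 4*k - 1 - d with hD
  have hDsum : d + D + 1 = 4*k := by omega
  have hdD : d ≠ D := by omega
  set A := Finset.univ.filter (fun v : Fin (4*k) => deg G v = d) with hA
  set B := Finset.univ.filter (fun v : Fin (4*k) => deg G v = D) with hB
  have hcards : ∀ c : ℕ, (Finset.univ.filter (fun v : Fin (4*k) => deg G v = c)).card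
      = Multiset.count c (Multiset.map (fun v => deg G v) Finset.univ.val) := by
    intro c
    rw [Multiset.count_map, Finset.card_def, Finset.filter_val]
    congr 1
    exact Multiset.filter_congr (fun x _ => by constructor <;> (intro h; omega))
  have hAcard : A.card = 2*k := by
    rw [hA, hcards, hG, Multiset.count_add, Multiset.count_replicate,
      Multiset.count_replicate, if_pos rfl, if_neg (by omega)]
    omega
  have hBcard : B.card = 2*k := by
    rw [hB, hcards, hG, Multiset.count_add, Multiset.count_replicate,
      Multiset.count_replicate, if_pos rfl, if_neg (by omega)]
    omega
  have hABdisj : Disjoint A B := by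
    rw [hA, hB, Finset.disjoint_left]
    intro a ha hb
    rw [Finset.mem_filter] at ha hb
    omega
  have hABun : A ∪ B = Finset.univ := by
    ext v
    simp only [hA, hB, Finset.mem_union, Finset.mem_filter, Finset.mem_univ, true_and,
      iff_true]
    exact hmem v
  have hφdeg : ∀ v : Fin (4*k), deg G (φ v) + deg G v + 1 = 4*k := by
    intro v
    have h1 : deg Gᶜ (φ v) = deg G v := by
      rw [deg, deg]
      exact Nat.card_congr (φ.mapNeighborSet v).symm
    have hlt : G.degree (φ v) < 4*k := by
      have h := G.degree_lt_card_verts (φ v)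
      simpa using h
    have h2 : Gᶜ.degree (φ v) = 4*k - 1 - G.degree (φ v) := by
      have h := G.degree_compl (φ v)
      simpa using h
    have h3 : deg Gᶜ (φ v) = Gᶜ.degree (φ v) := deg_eq_degree' _ _
    have h4 : deg G (φ v) = G.degree (φ v) := deg_eq_degree' _ _
    have h5 : deg G v = G.degree v := deg_eq_degree' _ _
    omega
  have hφmem : ∀ v : Fin (4*k), v ∈ A ↔ φ v ∈ B := by
    intro v
    rw [hA, hB, Finset.mem_filter, Finset.mem_filter]
    have h := hφdeg v
    constructor
    · rintro ⟨-, h2⟩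
      exact ⟨Finset.mem_univ _, by omega⟩
    · rintro ⟨-, h2⟩
      exact ⟨Finset.mem_univ _, by omega⟩
  -- counting
  have hdegsum : ∀ v : Fin (4*k), deg G v
      = (∑ w ∈ A, if G.Adj v w then 1 else 0) + (∑ w ∈ B, if G.Adj v w then 1 else 0) := by
    intro v
    have h1 : deg G v = ∑ w ∈ Finset.univ, if G.Adj v w then 1 else 0 := by
      rw [deg_eq_degree', SimpleGraph.degree, SimpleGraph.neighborFinset_eq_filter,
        Finset.card_filter]
    rw [h1, ← hABun, Finset.sum_union hABdisj]
  have e1 : (∑ v ∈ A, ∑ w ∈ A, if G.Adj v w then 1 else 0)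
      + (∑ v ∈ A, ∑ w ∈ B, if G.Adj v w then 1 else 0) = 2*k*d := by
    rw [← Finset.sum_add_distrib]
    have h2 : ∀ v ∈ A, ((∑ w ∈ A, if G.Adj v w then 1 else 0)
        + (∑ w ∈ B, if G.Adj v w then 1 else 0)) = d := by
      intro v hv
      rw [← hdegsum v]
      rw [hA, Finset.mem_filter] at hv
      exact hv.2
    rw [Finset.sum_congr rfl h2, Finset.sum_const, hAcard, smul_eq_mul]
  have e2 : (∑ v ∈ B, ∑ w ∈ A, if G.Adj v w then 1 else 0)
      + (∑ v ∈ B, ∑ w ∈ B, if G.Adj v w then 1 else 0) = 2*k*D := by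
    rw [← Finset.sum_add_distrib]
    have h2 : ∀ v ∈ B, ((∑ w ∈ A, if G.Adj v w then 1 else 0)
        + (∑ w ∈ B, if G.Adj v w then 1 else 0)) = D := by
      intro v hv
      rw [← hdegsum v]
      rw [hB, Finset.mem_filter] at hv
      exact hv.2
    rw [Finset.sum_congr rfl h2, Finset.sum_const, hBcard, smul_eq_mul]
  have e3 : (∑ v ∈ A, ∑ w ∈ B, if G.Adj v w then 1 else 0)
      = (∑ v ∈ B, ∑ w ∈ A, if G.Adj v w then 1 else 0) := by
    rw [Finset.sum_comm]
    exact Finset.sum_congr rfl fun y _ => Finset.sum_congr rfl fun x _ =>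
      if_congr (G.adj_comm x y) rfl rfl
  have e4 : (∑ v ∈ A, ∑ w ∈ A, if G.Adj v w then 1 else 0)
      = (∑ v ∈ B, ∑ w ∈ B, if Gᶜ.Adj v w then 1 else 0) := by
    refine Finset.sum_equiv φ.toEquiv (fun i => hφmem i) ?_
    intro i _
    refine Finset.sum_equiv φ.toEquiv (fun j => hφmem j) ?_
    intro j _
    exact if_congr (φ.map_adj_iff).symm rfl rfl
  have e5 : (∑ v ∈ B, ∑ w ∈ B, if Gᶜ.Adj v w then 1 else 0)
      + (∑ v ∈ B, ∑ w ∈ B, if G.Adj v w then 1 else 0) + 2*k = 2*k*(2*k) := by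
    have hpt : ∀ v w : Fin (4*k),
        ((if Gᶜ.Adj v w then 1 else 0) + (if G.Adj v w then 1 else 0))
          = if v ≠ w then 1 else 0 := by
      intro v w
      by_cases h : v = w
      · subst h; simp
      · by_cases h2 : G.Adj v w
        · simp [h, h2, SimpleGraph.compl_adj]
        · simp [h, h2, SimpleGraph.compl_adj]
    have hcomb : (∑ v ∈ B, ∑ w ∈ B, if Gᶜ.Adj v w then 1 else 0)
        + (∑ v ∈ B, ∑ w ∈ B, if G.Adj v w then 1 else 0)
        = ∑ v ∈ B, ∑ w ∈ B, if v ≠ w then 1 else 0 := by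
      rw [← Finset.sum_add_distrib]
      exact Finset.sum_congr rfl fun v _ => by
        rw [← Finset.sum_add_distrib]
        exact Finset.sum_congr rfl fun w _ => hpt v w
    rw [hcomb]
    have hin : ∀ v ∈ B, (∑ w ∈ B, if v ≠ w then 1 else 0) = 2*k - 1 := by
      intro v hv
      rw [← Finset.card_filter, Finset.filter_ne, Finset.card_erase_of_mem hv, hBcard]
    rw [Finset.sum_congr rfl hin, Finset.sum_const, hBcard, smul_eq_mul]
    have h2k' : 2*k = (2*k - 1) + 1 := by omega
    calc 2*k*(2*k-1) + 2*k = 2*k*((2*k-1)+1) := by rw [Nat.mul_succ]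
    _ = 2*k*(2*k) := by rw [← h2k']
  by_contra hcon
  push_neg at hcon
  have h3k : 3*k ≤ d := by omega
  have hmul : 2*k*(3*k) ≤ 2*k*d := Nat.mul_le_mul_left _ h3k
  have hDk : 2*k*d + 2*k*D + 2*k = 2*k*(4*k) := by
    have h := congrArg (fun x => 2*k*x) hDsum
    rw [← h]
    ring
  set a := ∑ v ∈ A, ∑ w ∈ A, if G.Adj v w then 1 else 0 with ha2
  set b := ∑ v ∈ A, ∑ w ∈ B, if G.Adj v w then 1 else 0 with hb2
  set c := ∑ v ∈ B, ∑ w ∈ A, if G.Adj v w then 1 else 0 with hc2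
  set e := ∑ v ∈ B, ∑ w ∈ B, if G.Adj v w then 1 else 0 with he2
  set f := ∑ v ∈ B, ∑ w ∈ B, if Gᶜ.Adj v w then 1 else 0 with hf2
  nlinarith [e1, e2, e3, e4, e5, hmul, hDk, hk]

/-- Let `k ≥ 1` and let `d` satisfy `d > 4k - 1 - d`.  There exists a
self-complementary graph with degree sequence `(d^{2k}, (4k-1-d)^{2k})` if and only if
`2k ≤ d ≤ 3k - 1`.  Moreover, when `2k ≤ d ≤ 3k - 1`, such a self-complementary graph
exists having an antimorphism that consists of a single cycle of length `4k` (i.e., a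
cyclic permutation without fixed points of all `4k` vertices). -/
theorem homogeneous_construction (k d : ℕ) (hk : 1 ≤ k) (hd : 4 * k - 1 - d < d) :
    ((∃ G : SimpleGraph (Fin (4 * k)),
        degMultiset G =
          Multiset.replicate (2 * k) d + Multiset.replicate (2 * k) (4 * k - 1 - d) ∧
        IsSelfCompl G) ↔ 2 * k ≤ d ∧ d + 1 ≤ 3 * k) ∧
    (2 * k ≤ d → d + 1 ≤ 3 * k →
      ∃ G : SimpleGraph (Fin (4 * k)),
        degMultiset G =
          Multiset.replicate (2 * k) d + Multiset.replicate (2 * k) (4 * k - 1 - d) ∧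
        ∃ σ : G ≃g Gᶜ,
          Equiv.Perm.IsCycle (σ.toEquiv : Equiv.Perm (Fin (4 * k))) ∧ ∀ v, σ v ≠ v) := by
  constructor
  · constructor
    · rintro ⟨G, hG, hsc⟩
      exact necessity' k d hk hd G hG hsc
    · rintro ⟨h1, h2⟩
      obtain ⟨t, s, hs, ht, hds⟩ : ∃ t s, s ≤ 1 ∧ t + 1 ≤ k ∧ d = k + 2*t + s :=
        ⟨(d - k)/2, (d - k) % 2, by omega, by omega, by omega⟩
      obtain ⟨G, hG, σ, -, -⟩ := construction' k d t s hk hs ht hds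
      exact ⟨G, hG, ⟨σ⟩⟩
  · intro h1 h2
    obtain ⟨t, s, hs, ht, hds⟩ : ∃ t s, s ≤ 1 ∧ t + 1 ≤ k ∧ d = k + 2*t + s :=
      ⟨(d - k)/2, (d - k) % 2, by omega, by omega, by omega⟩
    exact construction' k d t s hk hs ht hds
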